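/- Let d ≥ 1, N ≥ 1, A > 0, and let K : ℝ^d \ {0} → ℂ be N times continuously differentiable with |∂^γ K(x)| ≤ A · |x|^{−1−|γ|} for all x ≠ 0 and all multi-indices γ with |γ| ≤ N. Let b be an integrable function supported in an axis-parallel cube q with center x_q and side-length l, satisfying the moment conditions ∫ b(y) y^α dy = 0 for all multi-indices α with |α| ≤ N − 1. Then there is a constant C = C(d, N) such that for every x with |x − x_q| ≥ 2√d · l one has |∫ K(x − y) b(y) dy| ≤ C · A · l^N · |x − x_q|^{−N−1} · ∫ |b(y)| dy. -/

import Mathlib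

open MeasureTheory Real

open Set Finset in
private theorem hasFTaylor_compAffine {𝕜 : Type*} [NontriviallyNormedField 𝕜]
    {E : Type*} [NormedAddCommGroup E] [NormedSpace 𝕜 E]
    {F : Type*} [NormedAddCommGroup F] [NormedSpace 𝕜 F]
    {G : Type*} [NormedAddCommGroup G] [NormedSpace 𝕜 G]
    {n : WithTop ℕ∞} {f : E → F}
    {p : E → FormalMultilinearSeries 𝕜 E F} {s : Set E}
    (hf : HasFTaylorSeriesUpToOn n f p s) (g : G →L[𝕜] E) (c : E) :
    HasFTaylorSeriesUpToOn n (fun x => f (c + g x))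
      (fun x k => (p (c + g x) k).compContinuousLinearMap fun _ => g)
      ((fun x => c + g x) ⁻¹' s) := by
  let A : ∀ m : ℕ, (E[×m]→L[𝕜] F) → G[×m]→L[𝕜] F := fun m h =>
    h.compContinuousLinearMap fun _ => g
  have hA : ∀ m, IsBoundedLinearMap 𝕜 (A m) := fun m =>
    isBoundedLinearMap_continuousMultilinearMap_comp_linear g
  constructor
  · intro x hx
    simp only [(hf.zero_eq (c + g x) hx).symm]
    change (p (c + g x) 0 fun _ : Fin 0 => g 0) = p (c + g x) 0 0
    rw [ContinuousLinearMap.map_zero]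
    rfl
  · intro m hm x hx
    have hg : HasFDerivWithinAt (fun x : G => c + g x) g ((fun x => c + g x) ⁻¹' s) x :=
      (g.hasFDerivWithinAt.const_add c)
    convert (hA m).hasFDerivAt.comp_hasFDerivWithinAt x
        ((hf.fderivWithin m hm (c + g x) hx).comp x hg (Subset.refl _))
    · rfl
    · rfl
    · rfl
    · rfl
    ext y v
    change p (c + g x) (Nat.succ m) ((fun z => g z) ∘ Fin.cons y v)
      = p (c + g x) m.succ (Fin.cons (g y) ((fun z => g z) ∘ v))
    rw [Fin.comp_cons]
  · intro m hm
    exact (hA m).continuous.comp_continuousOn <| (hf.cont m hm).comp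
      (continuous_const.add g.continuous).continuousOn (Subset.refl _)

open Set in
private theorem lineDeriv_eq' {E F : Type*} [NormedAddCommGroup E] [NormedSpace ℝ E]
    [NormedAddCommGroup F] [NormedSpace ℝ F] {N : ℕ} {K : E → F} {s : Set E}
    (hs : UniqueDiffOn ℝ s) (hK : ContDiffOn ℝ N K s) (z w : E)
    (hsub : ∀ t : ℝ, t ∈ Icc (0:ℝ) 1 → z + t • w ∈ s)
    {k : ℕ} (hk : k ≤ N) {t : ℝ} (ht : t ∈ Icc (0:ℝ) 1) :
    iteratedDerivWithin k (fun t : ℝ => K (z + t • w)) (Icc (0:ℝ) 1) t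
      = iteratedFDerivWithin ℝ k K s (z + t • w) (fun _ => w) := by
  have h := hasFTaylor_compAffine (hK.ftaylorSeriesWithin hs)
    (ContinuousLinearMap.toSpanSingleton ℝ w) z
  have h' := (h.mono (fun u hu => hsub u hu)).eq_iteratedFDerivWithin_of_uniqueDiffOn
    (by exact_mod_cast hk) (uniqueDiffOn_Icc one_pos) ht
  simp only [ContinuousLinearMap.toSpanSingleton_apply] at h'
  rw [iteratedDerivWithin, ← h']
  simp [ftaylorSeriesWithin, ContinuousLinearMap.toSpanSingleton_apply]

/-- The axis-parallel cube with center `c` and side-length `l`. -/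
def axisCube {d : ℕ} (c : EuclideanSpace ℝ (Fin d)) (l : ℝ) :
    Set (EuclideanSpace ℝ (Fin d)) :=
  {x | ∀ i, |x i - c i| ≤ l / 2}

section Aux
open Set Finset

variable {d : ℕ}

private lemma axisCube_norm_le' {c : EuclideanSpace ℝ (Fin d)} {l : ℝ} (hl : 0 ≤ l)
    {y : EuclideanSpace ℝ (Fin d)} (hy : y ∈ axisCube c l) :
    ‖c - y‖ ≤ Real.sqrt d * (l / 2) := by
  have h : ‖c - y‖ ≤ Real.sqrt (∑ _i : Fin d, (l / 2) ^ 2) := by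
    rw [EuclideanSpace.norm_eq]
    apply Real.sqrt_le_sqrt
    apply Finset.sum_le_sum
    intro i _
    have := hy i
    have h2 : ‖(c - y) i‖ = |y i - c i| := by
      simp [PiLp.sub_apply, Real.norm_eq_abs, abs_sub_comm]
    rw [h2]
    exact pow_le_pow_left₀ (abs_nonneg _) this 2
  calc ‖c - y‖ ≤ Real.sqrt (∑ _i : Fin d, (l / 2) ^ 2) := h
    _ = Real.sqrt d * (l / 2) := by
        rw [Finset.sum_const, Finset.card_univ, Fintype.card_fin, nsmul_eq_mul,
          Real.sqrt_mul (by positivity), Real.sqrt_sq (by positivity)]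

private lemma axisCube_isCompact' (c : EuclideanSpace ℝ (Fin d)) {l : ℝ} (hl : 0 ≤ l) :
    IsCompact (axisCube c l) := by
  apply Metric.isCompact_of_isClosed_isBounded
  · have : axisCube c l = ⋂ i, {x : EuclideanSpace ℝ (Fin d) | |x i - c i| ≤ l / 2} := by
      ext x; simp [axisCube, Set.mem_iInter]
    rw [this]
    refine isClosed_iInter fun i => ?_
    have hc : Continuous fun x : EuclideanSpace ℝ (Fin d) => |x i - c i| :=
      (((EuclideanSpace.proj i).continuous).sub continuous_const).abs
    exact isClosed_le hc continuous_const
  · apply Bornology.IsBounded.subset (Metric.isBounded_closedBall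
      (x := c) (r := Real.sqrt d * (l / 2)))
    intro y hy
    rw [Metric.mem_closedBall, dist_eq_norm, ← norm_neg]
    simpa [neg_sub] using axisCube_norm_le' hl hy

private lemma integrable_mul_cont' {b : EuclideanSpace ℝ (Fin d) → ℂ} (hb : Integrable b)
    {s : Set (EuclideanSpace ℝ (Fin d))} (hs : IsCompact s)
    (hsupp : Function.support b ⊆ s) (f : EuclideanSpace ℝ (Fin d) → ℂ)
    (hf : Continuous f) : Integrable fun y => b y * f y := by
  obtain ⟨M, hM⟩ := hs.exists_bound_of_continuousOn hf.continuousOn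
  refine Integrable.mono' ((hb.norm.const_mul (max M 0)))
    (hb.aestronglyMeasurable.mul hf.aestronglyMeasurable) (ae_of_all _ fun y => ?_)
  rw [norm_mul]
  by_cases hy : b y = 0
  · simp only [hy, norm_zero, zero_mul]
    positivity
  · have : y ∈ s := hsupp hy
    calc ‖b y‖ * ‖f y‖ ≤ ‖b y‖ * max M 0 :=
          mul_le_mul_of_nonneg_left (le_trans (hM y this) (le_max_left _ _)) (norm_nonneg _)
      _ = max M 0 * ‖b y‖ := mul_comm _ _

private lemma moment_prod' {N : ℕ} {b : EuclideanSpace ℝ (Fin d) → ℂ} (hb : Integrable b)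
    {c : EuclideanSpace ℝ (Fin d)} {l : ℝ} (hl : 0 ≤ l)
    (hsupp : Function.support b ⊆ axisCube c l)
    (hmom : ∀ α : Fin d → ℕ, (∑ i, α i) ≤ N - 1 →
      ∫ y, b y * (∏ i, (y i : ℂ) ^ α i) = 0)
    {k : ℕ} (hk : k ≤ N - 1) (r : Fin k → Fin d) :
    ∫ y, b y * ∏ m, ((c (r m) : ℂ) - (y (r m) : ℂ)) = 0 := by
  classical
  have hexp : ∀ y : EuclideanSpace ℝ (Fin d),
      (∏ m, ((c (r m) : ℂ) - (y (r m) : ℂ))) =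
        ∑ t ∈ (univ : Finset (Fin k)).powerset,
          (∏ m ∈ t, (-(y (r m) : ℂ))) * ∏ m ∈ univ \ t, (c (r m) : ℂ) := by
    intro y
    rw [← Finset.prod_add]
    apply Finset.prod_congr rfl
    intro m _
    ring
  have hint : ∀ t : Finset (Fin k),
      Integrable (fun y : EuclideanSpace ℝ (Fin d) => b y *
        ((∏ m ∈ t, (-(y (r m) : ℂ))) * ∏ m ∈ univ \ t, (c (r m) : ℂ))) := by
    intro t
    apply integrable_mul_cont' hb (axisCube_isCompact' c hl) hsupp
    refine Continuous.mul ?_ continuous_const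
    exact continuous_finset_prod _ fun m _ =>
      (Complex.continuous_ofReal.comp ((EuclideanSpace.proj (r m)).continuous)).neg
  calc ∫ y, b y * ∏ m, ((c (r m) : ℂ) - (y (r m) : ℂ))
      = ∫ y, ∑ t ∈ (univ : Finset (Fin k)).powerset, b y *
          ((∏ m ∈ t, (-(y (r m) : ℂ))) * ∏ m ∈ univ \ t, (c (r m) : ℂ)) := by
        congr 1; funext y; rw [hexp y, Finset.mul_sum]
    _ = ∑ t ∈ (univ : Finset (Fin k)).powerset, ∫ y, b y *
          ((∏ m ∈ t, (-(y (r m) : ℂ))) * ∏ m ∈ univ \ t, (c (r m) : ℂ)) :=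
        integral_finset_sum _ fun t _ => hint t
    _ = 0 := by
        apply Finset.sum_eq_zero
        intro t _
        have hmono : ∀ y : EuclideanSpace ℝ (Fin d),
            (∏ m ∈ t, (y (r m) : ℂ)) = ∏ i, (y i : ℂ) ^ ((t.filter fun m => r m = i).card) := by
          intro y
          rw [← Finset.prod_fiberwise_of_maps_to (fun m _ => Finset.mem_univ (r m))
            (fun m => (y (r m) : ℂ))]
          apply Finset.prod_congr rfl
          intro i _
          rw [← Finset.prod_const]
          apply Finset.prod_congr rfl
          intro m hm
          rw [(Finset.mem_filter.1 hm).2]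
        have hrw : (fun y : EuclideanSpace ℝ (Fin d) => b y *
            ((∏ m ∈ t, (-(y (r m) : ℂ))) * ∏ m ∈ univ \ t, (c (r m) : ℂ))) =
            fun y => ((-1 : ℂ) ^ t.card * ∏ m ∈ univ \ t, (c (r m) : ℂ)) *
              (b y * ∏ i, (y i : ℂ) ^ ((t.filter fun m => r m = i).card)) := by
          funext y
          rw [← hmono y]
          rw [show (∏ m ∈ t, (-(y (r m) : ℂ))) = (-1 : ℂ) ^ t.card * ∏ m ∈ t, (y (r m) : ℂ) by
            rw [← Finset.prod_const, ← Finset.prod_mul_distrib]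
            exact Finset.prod_congr rfl fun m _ => by ring]
          ring
        rw [hrw, integral_const_mul, hmom _ ?_, mul_zero]
        · calc (∑ i, (t.filter fun m => r m = i).card)
              = t.card := (Finset.card_eq_sum_card_fiberwise
                (fun m _ => Finset.mem_univ (r m))).symm
            _ ≤ k := by simpa using Finset.card_le_univ t
            _ ≤ N - 1 := hk

private lemma moment_multilinear' {N : ℕ} {b : EuclideanSpace ℝ (Fin d) → ℂ}
    (hb : Integrable b)
    {c : EuclideanSpace ℝ (Fin d)} {l : ℝ} (hl : 0 ≤ l)
    (hsupp : Function.support b ⊆ axisCube c l)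
    (hmom : ∀ α : Fin d → ℕ, (∑ i, α i) ≤ N - 1 →
      ∫ y, b y * (∏ i, (y i : ℂ) ^ α i) = 0)
    {k : ℕ} (hk : k ≤ N - 1)
    (T : ContinuousMultilinearMap ℝ (fun _ : Fin k => EuclideanSpace ℝ (Fin d)) ℂ) :
    ∫ y, b y * T (fun _ => c - y) = 0 := by
  classical
  have hrepr : ∀ v : EuclideanSpace ℝ (Fin d),
      v = ∑ i, v i • EuclideanSpace.single i (1 : ℝ) := by
    intro v
    have := (EuclideanSpace.basisFun (Fin d) ℝ).sum_repr v
    simp only [EuclideanSpace.basisFun_repr, EuclideanSpace.basisFun_apply] at this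
    exact this.symm
  have hexp : ∀ y : EuclideanSpace ℝ (Fin d), b y * T (fun _ => c - y) =
      ∑ r : Fin k → Fin d,
        (b y * ∏ m, ((c (r m) : ℂ) - (y (r m) : ℂ))) *
          T (fun m => EuclideanSpace.single (r m) (1 : ℝ)) := by
    intro y
    conv_lhs => rw [hrepr (c - y)]
    have hms := T.toMultilinearMap.map_sum
      (g := fun (_ : Fin k) (i : Fin d) => (c - y) i • EuclideanSpace.single i (1 : ℝ))
    simp only [ContinuousMultilinearMap.coe_coe] at hms
    rw [hms, Finset.mul_sum]
    apply Finset.sum_congr rfl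
    intro r _
    rw [show (T fun m => (c - y) (r m) • EuclideanSpace.single (r m) (1 : ℝ)) =
        (∏ m, (c - y) (r m)) • T fun m => EuclideanSpace.single (r m) (1 : ℝ) from
      T.toMultilinearMap.map_smul_univ _ _]
    rw [Complex.real_smul]
    push_cast [PiLp.sub_apply]
    ring
  calc ∫ y, b y * T (fun _ => c - y)
      = ∑ r : Fin k → Fin d, ∫ y,
          (b y * ∏ m, ((c (r m) : ℂ) - (y (r m) : ℂ))) *
            T (fun m => EuclideanSpace.single (r m) (1 : ℝ)) := by
        rw [← integral_finset_sum]
        · congr 1; funext y; rw [hexp y]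
        · intro r _
          have hcont : Continuous fun y : EuclideanSpace ℝ (Fin d) =>
              (∏ m, ((c (r m) : ℂ) - (y (r m) : ℂ))) *
                T (fun m => EuclideanSpace.single (r m) (1 : ℝ)) := by
            refine Continuous.mul ?_ continuous_const
            exact continuous_finset_prod _ fun m _ =>
              continuous_const.sub
                (Complex.continuous_ofReal.comp (EuclideanSpace.proj (r m)).continuous)
          have := integrable_mul_cont' hb (axisCube_isCompact' c hl) hsupp _ hcont
          simpa [mul_assoc] using this
    _ = 0 := by
        apply Finset.sum_eq_zero
        intro r _
        rw [integral_mul_const, moment_prod' hb hl hsupp hmom hk r, zero_mul]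

end Aux

/-- if `K` is `C^N` away from the origin with
`|∂^γ K(x)| ≤ A |x|^{-1-|γ|}` for `|γ| ≤ N`, and `b` is integrable, supported in a cube `q`
with center `x_q` and side-length `l`, with vanishing moments up to order `N - 1`, then for
`|x - x_q| ≥ 2√d·l` one has
`|∫ K(x-y) b(y) dy| ≤ C A l^N |x - x_q|^{-N-1} ∫ |b|`, with `C = C(d, N)`. -/
theorem kernel_vs_cancellation (d N : ℕ) (hd : 1 ≤ d) (hN : 1 ≤ N) :
    ∃ C : ℝ, 0 < C ∧
      ∀ (A : ℝ), 0 < A →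
      ∀ K : EuclideanSpace ℝ (Fin d) → ℂ,
        ContDiffOn ℝ N K {(0 : EuclideanSpace ℝ (Fin d))}ᶜ →
        (∀ n : ℕ, n ≤ N → ∀ x : EuclideanSpace ℝ (Fin d), x ≠ 0 →
          ‖iteratedFDerivWithin ℝ n K {(0 : EuclideanSpace ℝ (Fin d))}ᶜ x‖ ≤
            A * ‖x‖ ^ (-(1 : ℝ) - n)) →
      ∀ (xq : EuclideanSpace ℝ (Fin d)) (l : ℝ), 0 < l →
      ∀ b : EuclideanSpace ℝ (Fin d) → ℂ, Integrable b →
        Function.support b ⊆ axisCube xq l →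
        (∀ α : Fin d → ℕ, (∑ i, α i) ≤ N - 1 →
          ∫ y, b y * (∏ i, (y i : ℂ) ^ α i) = 0) →
      ∀ x : EuclideanSpace ℝ (Fin d), 2 * Real.sqrt d * l ≤ ‖x - xq‖ →
        ‖∫ y, K (x - y) * b y‖ ≤
          C * A * l ^ N * ‖x - xq‖ ^ (-(N : ℝ) - 1) * ∫ y, ‖b y‖ := by
  classical
  have hd0 : (0:ℝ) < d := by exact_mod_cast hd
  have hsd : 0 < Real.sqrt d := Real.sqrt_pos.2 hd0
  have hNfac : (0:ℝ) < (Nat.factorial (N - 1)) := by positivity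
  refine ⟨(4/3 : ℝ) ^ (N + 1) * (Real.sqrt d / 2) ^ N / (Nat.factorial (N - 1)), by positivity, ?_⟩
  intro A hA K hK hKb xq l hl b hb hbsupp hbmom x hx
  set S : Set (EuclideanSpace ℝ (Fin d)) := {(0 : EuclideanSpace ℝ (Fin d))}ᶜ with hSdef
  have hSu : UniqueDiffOn ℝ S := isOpen_compl_singleton.uniqueDiffOn
  have hz : 0 < ‖x - xq‖ := lt_of_lt_of_le (by positivity) hx
  have hwz : Real.sqrt d * (l / 2) ≤ ‖x - xq‖ / 4 := by linarith
  -- the segment from x - y to x - xq stays far from the origin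
  have hphi : ∀ y ∈ axisCube xq l, ∀ t ∈ Set.Icc (0:ℝ) 1,
      3/4 * ‖x - xq‖ ≤ ‖(x - xq) + t • (xq - y)‖ := by
    intro y hy t ht
    have h1 : ‖t • (xq - y)‖ ≤ ‖x - xq‖ / 4 := by
      rw [norm_smul, Real.norm_eq_abs, abs_of_nonneg ht.1]
      calc t * ‖xq - y‖ ≤ 1 * ‖xq - y‖ :=
            mul_le_mul_of_nonneg_right ht.2 (norm_nonneg _)
        _ = ‖xq - y‖ := one_mul _
        _ ≤ Real.sqrt d * (l/2) := axisCube_norm_le' hl.le hy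
        _ ≤ ‖x - xq‖ / 4 := hwz
    have h2 : ‖x - xq‖ ≤ ‖(x - xq) + t • (xq - y)‖ + ‖t • (xq - y)‖ := by
      calc ‖x - xq‖ = ‖((x - xq) + t • (xq - y)) - t • (xq - y)‖ := by
            congr 1; abel
        _ ≤ ‖(x - xq) + t • (xq - y)‖ + ‖t • (xq - y)‖ := norm_sub_le _ _
    linarith
  have hphiS : ∀ y ∈ axisCube xq l, ∀ t ∈ Set.Icc (0:ℝ) 1,
      (x - xq) + t • (xq - y) ∈ S := by
    intro y hy t ht
    have := hphi y hy t ht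
    have hpos : 0 < ‖(x - xq) + t • (xq - y)‖ := by nlinarith
    simpa [hSdef] using norm_pos_iff.1 hpos
  -- smoothness of K along each segment
  have hgK : ∀ y ∈ axisCube xq l,
      ContDiffOn ℝ N (fun t : ℝ => K ((x - xq) + t • (xq - y))) (Set.Icc 0 1) := by
    intro y hy
    apply hK.comp
    · exact (contDiff_const.add (contDiff_id.smul contDiff_const)).contDiffOn
    · intro t ht
      exact hphiS y hy t ht
  set Cb : ℝ := A * ((3/4) * ‖x - xq‖) ^ (-(1:ℝ) - N) * (Real.sqrt d * (l/2)) ^ N with hCbdef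
  have hCbpos : 0 < Cb := by
    have : (0:ℝ) < ((3/4) * ‖x - xq‖) ^ (-(1:ℝ) - N) :=
      Real.rpow_pos_of_pos (by linarith) _
    positivity
  -- Taylor remainder bound
  have hTay : ∀ y ∈ axisCube xq l,
      ‖K (x - y) - ∑ k ∈ Finset.range N, ((Nat.factorial k : ℝ))⁻¹ •
        ((iteratedFDerivWithin ℝ k K S (x - xq)) fun _ : Fin k => xq - y)‖
        ≤ Cb / (Nat.factorial (N - 1)) := by
    intro y hy
    have hcast : ((N - 1 : ℕ) : ℕ∞) + 1 = (N : ℕ∞) := by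
      exact_mod_cast congrArg (Nat.cast : ℕ → ℕ∞) (Nat.sub_add_cancel hN)
    have hf : ContDiffOn ℝ ((N - 1 : ℕ) + 1)
        (fun t : ℝ => K ((x - xq) + t • (xq - y))) (Set.Icc 0 1) := by
      have h' := hgK y hy
      rw [show N = (N - 1) + 1 from (Nat.sub_add_cancel hN).symm] at h'
      exact_mod_cast h'
    have hC : ∀ t ∈ Set.Icc (0:ℝ) 1,
        ‖iteratedDerivWithin ((N - 1) + 1)
          (fun t : ℝ => K ((x - xq) + t • (xq - y))) (Set.Icc 0 1) t‖ ≤ Cb := by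
      intro t ht
      rw [Nat.sub_add_cancel hN,
        lineDeriv_eq' hSu hK (x - xq) (xq - y) (fun u hu => hphiS y hy u hu) le_rfl ht]
      have hne : (x - xq) + t • (xq - y) ≠ 0 := by
        simpa [hSdef] using hphiS y hy t ht
      calc ‖(iteratedFDerivWithin ℝ N K S ((x - xq) + t • (xq - y)))
            fun _ : Fin N => xq - y‖
          ≤ ‖iteratedFDerivWithin ℝ N K S ((x - xq) + t • (xq - y))‖ *
            ∏ _m : Fin N, ‖xq - y‖ := ContinuousMultilinearMap.le_opNorm _ _
        _ = ‖iteratedFDerivWithin ℝ N K S ((x - xq) + t • (xq - y))‖ * ‖xq - y‖ ^ N := by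
            rw [Finset.prod_const, Finset.card_univ, Fintype.card_fin]
        _ ≤ (A * ((3/4) * ‖x - xq‖) ^ (-(1:ℝ) - N)) * (Real.sqrt d * (l/2)) ^ N := by
            apply mul_le_mul
            · calc ‖iteratedFDerivWithin ℝ N K S ((x - xq) + t • (xq - y))‖
                  ≤ A * ‖(x - xq) + t • (xq - y)‖ ^ (-(1:ℝ) - N) := hKb N le_rfl _ hne
                _ ≤ A * ((3/4) * ‖x - xq‖) ^ (-(1:ℝ) - N) := by
                    apply mul_le_mul_of_nonneg_left _ hA.le
                    apply Real.rpow_le_rpow_of_nonpos (by linarith) (hphi y hy t ht)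
                    have : (0:ℝ) ≤ (N:ℝ) := Nat.cast_nonneg N
                    linarith
            · exact pow_le_pow_left₀ (norm_nonneg _) (axisCube_norm_le' hl.le hy) N
            · positivity
            · positivity
        _ = Cb := by rw [hCbdef]
    have := taylor_mean_remainder_bound (f := fun t : ℝ => K ((x - xq) + t • (xq - y)))
      (n := N - 1) zero_le_one hf (Set.right_mem_Icc.2 zero_le_one) hC
    have heval : (fun t : ℝ => K ((x - xq) + t • (xq - y))) 1 = K (x - y) := by
      simp only [one_smul]
      congr 1
      abel
    have htaylor : taylorWithinEval (fun t : ℝ => K ((x - xq) + t • (xq - y)))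
        (N - 1) (Set.Icc 0 1) 0 1 =
        ∑ k ∈ Finset.range N, ((Nat.factorial k : ℝ))⁻¹ •
          ((iteratedFDerivWithin ℝ k K S (x - xq)) fun _ : Fin k => xq - y) := by
      rw [taylor_within_apply, Nat.sub_add_cancel hN]
      apply Finset.sum_congr rfl
      intro k hk
      have hkN : k ≤ N := le_of_lt (Finset.mem_range.1 hk)
      have h0 : (0:ℝ) ∈ Set.Icc (0:ℝ) 1 := Set.left_mem_Icc.2 zero_le_one
      rw [lineDeriv_eq' hSu hK (x - xq) (xq - y) (fun u hu => hphiS y hy u hu) hkN h0]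
      rw [show (x - xq) + (0:ℝ) • (xq - y) = x - xq by rw [zero_smul, add_zero]]
      norm_num
    rw [show K ((x - xq) + (1:ℝ) • (xq - y)) = K (x - y) from heval, htaylor] at this
    calc ‖K (x - y) - ∑ k ∈ Finset.range N, ((Nat.factorial k : ℝ))⁻¹ •
          ((iteratedFDerivWithin ℝ k K S (x - xq)) fun _ : Fin k => xq - y)‖
        ≤ Cb * (1 - 0) ^ (N - 1 + 1) / (Nat.factorial (N - 1)) := this
      _ = Cb / (Nat.factorial (N - 1)) := by norm_num
  -- pointwise estimate including b
  have hkey : ∀ y, ‖K (x - y) * b y - ∑ k ∈ Finset.range N, ((Nat.factorial k : ℝ))⁻¹ •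
      (b y * ((iteratedFDerivWithin ℝ k K S (x - xq)) fun _ : Fin k => xq - y))‖
      ≤ Cb / (Nat.factorial (N - 1)) * ‖b y‖ := by
    intro y
    by_cases hy : y ∈ Function.support b
    · have hycube : y ∈ axisCube xq l := hbsupp hy
      have hfac : K (x - y) * b y - ∑ k ∈ Finset.range N, ((Nat.factorial k : ℝ))⁻¹ •
          (b y * ((iteratedFDerivWithin ℝ k K S (x - xq)) fun _ : Fin k => xq - y)) =
          b y * (K (x - y) - ∑ k ∈ Finset.range N, ((Nat.factorial k : ℝ))⁻¹ •
            ((iteratedFDerivWithin ℝ k K S (x - xq)) fun _ : Fin k => xq - y)) := by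
        rw [mul_sub, Finset.mul_sum, mul_comm (K (x - y)) (b y)]
        congr 1
        apply Finset.sum_congr rfl
        intro k _
        rw [mul_smul_comm]
      rw [hfac, norm_mul, mul_comm]
      exact mul_le_mul_of_nonneg_right (hTay y hycube) (norm_nonneg _)
    · have hy0 : b y = 0 := Function.notMem_support.1 hy
      simp [hy0]
  -- integrability
  have hIk : ∀ k : ℕ, Integrable (fun y => b y *
      ((iteratedFDerivWithin ℝ k K S (x - xq)) fun _ : Fin k => xq - y)) := by
    intro k
    apply integrable_mul_cont' hb (axisCube_isCompact' xq hl.le) hbsupp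
    exact (iteratedFDerivWithin ℝ k K S (x - xq)).cont.comp
      (continuous_pi fun m => continuous_const.sub continuous_id)
  have hIks : ∀ k : ℕ, Integrable (fun y => ((Nat.factorial k : ℝ))⁻¹ • (b y *
      ((iteratedFDerivWithin ℝ k K S (x - xq)) fun _ : Fin k => xq - y))) := by
    intro k
    exact (hIk k).smul (((Nat.factorial k : ℝ))⁻¹)
  have hsumInt : Integrable (fun y => ∑ k ∈ Finset.range N, ((Nat.factorial k : ℝ))⁻¹ • (b y *
      ((iteratedFDerivWithin ℝ k K S (x - xq)) fun _ : Fin k => xq - y))) :=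
    integrable_finset_sum _ fun k _ => hIks k
  have hmeas_cube : MeasurableSet (axisCube xq l) :=
    (axisCube_isCompact' xq hl.le).isClosed.measurableSet
  have hf1 : Integrable (fun y => K (x - y) * b y) := by
    set f0 : EuclideanSpace ℝ (Fin d) → ℂ :=
      (axisCube xq l).indicator (fun y => K (x - y)) with hf0def
    have hmaps : Set.MapsTo (fun y : EuclideanSpace ℝ (Fin d) => x - y)
        (axisCube xq l) S := by
      intro y hy
      have hxy : x - y = (x - xq) + (1:ℝ) • (xq - y) := by rw [one_smul]; abel
      show x - y ∈ S
      rw [hxy]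
      exact hphiS y hy 1 (Set.right_mem_Icc.2 zero_le_one)
    have hcontK : ContinuousOn (fun y : EuclideanSpace ℝ (Fin d) => K (x - y))
        (axisCube xq l) :=
      hK.continuousOn.comp (continuous_const.sub continuous_id).continuousOn hmaps
    have hmf0 : AEStronglyMeasurable f0 volume :=
      (aestronglyMeasurable_indicator_iff hmeas_cube).2
        (hcontK.aestronglyMeasurable hmeas_cube)
    have heq : (fun y => K (x - y) * b y) = fun y => f0 y * b y := by
      funext y
      by_cases hy : b y = 0
      · simp [hy]
      · have hycube : y ∈ axisCube xq l := hbsupp hy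
        rw [hf0def, Set.indicator_of_mem hycube]
    set M : ℝ := A * ((3/4) * ‖x - xq‖) ^ (-(1:ℝ)) with hMdef
    have hM0 : 0 ≤ M := by
      have := Real.rpow_pos_of_pos (show (0:ℝ) < (3/4) * ‖x - xq‖ by linarith) (-(1:ℝ))
      positivity
    rw [heq]
    refine Integrable.mono' (hb.norm.const_mul M)
      (hmf0.mul hb.aestronglyMeasurable) (ae_of_all _ fun y => ?_)
    rw [norm_mul]
    by_cases hy : y ∈ axisCube xq l
    · have hne : x - y ≠ 0 := by
        have : x - y = (x - xq) + (1:ℝ) • (xq - y) := by rw [one_smul]; abel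
        rw [this]
        simpa [hSdef] using hphiS y hy 1 (Set.right_mem_Icc.2 zero_le_one)
      have hKy : ‖K (x - y)‖ ≤ M := by
        have h1 : ‖K (x - y)‖ = ‖iteratedFDerivWithin ℝ 0 K S (x - y)‖ := by
          rw [norm_iteratedFDerivWithin_zero]
        have h2 := hKb 0 (Nat.zero_le N) (x - y) hne
        have h3 : ‖x - y‖ ^ (-(1:ℝ) - (0:ℕ)) ≤ ((3/4) * ‖x - xq‖) ^ (-(1:ℝ)) := by
          have h4 : 3/4 * ‖x - xq‖ ≤ ‖x - y‖ := by
            have : x - y = (x - xq) + (1:ℝ) • (xq - y) := by rw [one_smul]; abel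
            rw [this]
            exact hphi y hy 1 (Set.right_mem_Icc.2 zero_le_one)
          have := Real.rpow_le_rpow_of_nonpos (show (0:ℝ) < (3/4) * ‖x - xq‖ by linarith)
            h4 (show -(1:ℝ) ≤ 0 by norm_num)
          simpa using this
        calc ‖K (x - y)‖ = ‖iteratedFDerivWithin ℝ 0 K S (x - y)‖ := h1
          _ ≤ A * ‖x - y‖ ^ (-(1:ℝ) - (0:ℕ)) := h2
          _ ≤ A * ((3/4) * ‖x - xq‖) ^ (-(1:ℝ)) := mul_le_mul_of_nonneg_left h3 hA.le
          _ = M := hMdef.symm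
      rw [hf0def, Set.indicator_of_mem hy]
      exact mul_le_mul_of_nonneg_right hKy (norm_nonneg _)
    · rw [hf0def, Set.indicator_of_notMem hy]
      simp only [norm_zero, zero_mul]
      positivity
  -- moments kill the Taylor polynomial
  have hzero : ∀ k ∈ Finset.range N, ∫ y, b y *
      ((iteratedFDerivWithin ℝ k K S (x - xq)) fun _ : Fin k => xq - y) = 0 := by
    intro k hk
    exact moment_multilinear' hb hl.le hbsupp hbmom
      (Nat.le_sub_one_of_lt (Finset.mem_range.1 hk)) _
  have hsplit : ∫ y, K (x - y) * b y = ∫ y, (K (x - y) * b y -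
      ∑ k ∈ Finset.range N, ((Nat.factorial k : ℝ))⁻¹ • (b y *
        ((iteratedFDerivWithin ℝ k K S (x - xq)) fun _ : Fin k => xq - y))) := by
    rw [integral_sub hf1 hsumInt]
    have : (∫ y, ∑ k ∈ Finset.range N, ((Nat.factorial k : ℝ))⁻¹ • (b y *
        ((iteratedFDerivWithin ℝ k K S (x - xq)) fun _ : Fin k => xq - y))) = 0 := by
      rw [integral_finset_sum _ fun k _ => hIks k]
      apply Finset.sum_eq_zero
      intro k hk
      rw [integral_smul, hzero k hk, smul_zero]
    rw [this, sub_zero]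
  have hconst : Cb / (Nat.factorial (N - 1)) =
      ((4/3 : ℝ) ^ (N + 1) * (Real.sqrt d / 2) ^ N / (Nat.factorial (N - 1))) * A * l ^ N *
        ‖x - xq‖ ^ (-(N : ℝ) - 1) := by
    rw [hCbdef]
    rw [Real.mul_rpow (by norm_num) (norm_nonneg _)]
    rw [show ((3:ℝ)/4) ^ (-(1:ℝ) - N) = (4/3 : ℝ) ^ (N + 1) by
      rw [show (-(1:ℝ) - N) = -((N + 1 : ℕ) : ℝ) by push_cast; ring,
        Real.rpow_neg (by norm_num), Real.rpow_natCast, ← inv_pow]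
      norm_num]
    rw [show (-(1:ℝ) - N) = (-(N : ℝ) - 1) by ring]
    rw [show Real.sqrt d * (l/2) = (Real.sqrt d / 2) * l by ring, mul_pow]
    ring
  calc ‖∫ y, K (x - y) * b y‖
      = ‖∫ y, (K (x - y) * b y - ∑ k ∈ Finset.range N, ((Nat.factorial k : ℝ))⁻¹ • (b y *
          ((iteratedFDerivWithin ℝ k K S (x - xq)) fun _ : Fin k => xq - y)))‖ := by
        rw [hsplit]
    _ ≤ ∫ y, Cb / (Nat.factorial (N - 1)) * ‖b y‖ :=
        norm_integral_le_of_norm_le (hb.norm.const_mul _) (ae_of_all _ hkey)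
    _ = Cb / (Nat.factorial (N - 1)) * ∫ y, ‖b y‖ := integral_const_mul _ _
    _ = ((4/3 : ℝ) ^ (N + 1) * (Real.sqrt d / 2) ^ N / (Nat.factorial (N - 1))) * A * l ^ N *
        ‖x - xq‖ ^ (-(N : ℝ) - 1) * ∫ y, ‖b y‖ := by rw [hconst]
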